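/- arXiv:math-ph/9907007 — 2 statements merged into one kernel-verified Lean document; each statement's English description precedes it below -/
import Mathlib

section
/- (Noether's theorem, Hamiltonian multivector field version) Let Ω be an (m+1)-form on a manifold F, X an m-multivector field with i(X)Ω = 0, and Y a vector field with i(Y)Ω = dξ for some (m−1)-form ξ. Then L(X)ξ = 0, where L(X) = d∘i(X) − (−1)^m i(X)∘d. -/
/-!
Abstract calculus of differential forms and multivector fields on a manifold `E`
(in the sense of the appendix of the paper): `Form` is the (ungraded) space of
differential forms, `IsDeg k ω` says `ω` is homogeneous of degree `k`; `VF` is the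
space of vector fields and `MVF m` the space of `m`-multivector fields; `d` is the
exterior differential, `iV`/`iM` the interior contractions, `lieV` the Lie derivative
of forms along a vector field, `vbrk` the Lie bracket of vector fields and `sbrk` the
Schouten–Nijenhuis bracket of a vector field with an `m`-multivector field. -/
structure MVCalc (Form : Type*) [AddCommGroup Form] (VF : Type*) (MVF : ℕ → Type*) where
  d : Form →+ Form
  iV : VF → Form →+ Form
  iM : ∀ m, MVF m → Form →+ Form
  lieV : VF → Form →+ Form
  vbrk : VF → VF → VF
  sbrk : ∀ m, VF → MVF m → MVF m
  IsDeg : ℕ → Form → Prop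
  /-- Cartan's magic formula `L_Y = d ∘ i(Y) + i(Y) ∘ d`. -/
  cartan : ∀ Y ω, lieV Y ω = d (iV Y ω) + iV Y (d ω)
  d_d : ∀ ω, d (d ω) = 0
  d_isDeg : ∀ {k ω}, IsDeg k ω → IsDeg (k + 1) (d ω)
  lieV_d : ∀ Y ω, lieV Y (d ω) = d (lieV Y ω)
  /-- The Lie derivative along the Lie bracket of vector fields is the commutator. -/
  lieV_vbrk : ∀ Y₁ Y₂ ω, lieV (vbrk Y₁ Y₂) ω = lieV Y₁ (lieV Y₂ ω) - lieV Y₂ (lieV Y₁ ω)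
  /-- `i([Y,Z])Ω = L(Y) i(Z)Ω − (−1)^{1+m} i(Z) L(Y)Ω` for a vector field `Y` and an
  `m`-multivector field `Z` (Schouten–Nijenhuis bracket identity). -/
  iM_sbrk : ∀ m Y (Z : MVF m) ω,
    iM m (sbrk m Y Z) ω = lieV Y (iM m Z ω) - ((-1 : ℤ) ^ (1 + m)) • iM m Z (lieV Y ω)
  /-- Contraction of an `m`-multivector field with the 1-contraction of a vector field:
  `i(X) i(Y) Ω = (−1)^m i(Y) i(X) Ω`. -/
  iM_iV_comm : ∀ m (X : MVF m) Y ω, iM m X (iV Y ω) = ((-1 : ℤ) ^ m) • iV Y (iM m X ω)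
  /-- On forms of degree `< m` the contraction with an `m`-multivector field vanishes. -/
  iM_lowDeg : ∀ m (X : MVF m) {k ω}, k < m → IsDeg k ω → iM m X ω = 0

namespace MVCalc
variable {Form : Type*} [AddCommGroup Form] {VF : Type*} {MVF : ℕ → Type*}

/-- The Lie derivative along an `m`-multivector field:
`L(X) = d ∘ i(X) − (−1)^m i(X) ∘ d`. -/
def lieM (C : MVCalc Form VF MVF) (m : ℕ) (X : MVF m) (ω : Form) : Form :=
  C.d (C.iM m X ω) - ((-1 : ℤ) ^ m) • C.iM m X (C.d ω)

end MVCalc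

/-- Noether's theorem, Hamiltonian multivector field version:
if `i(X)Ω = 0` for an `m`-multivector field `X` and `i(Y)Ω = dξ` for a vector field `Y`
and an `(m−1)`-form `ξ`, then `L(X)ξ = 0`, where `L(X) = d∘i(X) − (−1)^m i(X)∘d`. -/
theorem noether_theorem_multivector
    {Form : Type*} [AddCommGroup Form] {VF : Type*} {MVF : ℕ → Type*}
    (C : MVCalc Form VF MVF) (m : ℕ) (hm : 1 ≤ m) (Ω ξ : Form)
    (hΩ : C.IsDeg (m + 1) Ω) (hξ : C.IsDeg (m - 1) ξ)
    (X : MVF m) (hX : C.iM m X Ω = 0)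
    (Y : VF) (hY : C.iV Y Ω = C.d ξ) :
    C.lieM m X ξ = 0 := by
  have h1 : C.iM m X ξ = 0 := C.iM_lowDeg m X (by omega) hξ
  have h2 : C.iM m X (C.d ξ) = 0 := by
    rw [← hY, C.iM_iV_comm, hX]; simp
  unfold MVCalc.lieM
  rw [h1, h2]; simp
end

section
/- (Generalized Noether theorem for order-2 symmetries) Let Ω be an (m+1)-form on F, X an m-multivector field with i(X)Ω = 0, and Y a vector field such that [Y,X] = Z with i(Z)Ω = 0, and such that L_Y(i(Y)Ω) = dξ for an (m−1)-form ξ. Then L(X)ξ = 0. -/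
/-- generalized Noether theorem for order-2 symmetries:
if `i(X)Ω = 0`, the Schouten–Nijenhuis bracket `Z = [Y,X]` satisfies `i(Z)Ω = 0`,
and `L_Y(i(Y)Ω) = dξ` for an `(m−1)`-form `ξ`, then `L(X)ξ = 0`. -/
theorem noether_theorem_order_two
    {Form : Type*} [AddCommGroup Form] {VF : Type*} {MVF : ℕ → Type*}
    (C : MVCalc Form VF MVF) (m : ℕ) (hm : 1 ≤ m) (Ω ξ : Form)
    (hΩ : C.IsDeg (m + 1) Ω) (hξ : C.IsDeg (m - 1) ξ)
    (X : MVF m) (hX : C.iM m X Ω = 0)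
    (Y : VF) (Z : MVF m) (hZdef : Z = C.sbrk m Y X) (hZ : C.iM m Z Ω = 0)
    (hd : C.lieV Y (C.iV Y Ω) = C.d ξ) :
    C.lieM m X ξ = 0 := by
  have hXξ : C.iM m X ξ = 0 := C.iM_lowDeg m X (Nat.sub_lt hm one_pos) hξ
  have hXiY : C.iM m X (C.iV Y Ω) = 0 := by
    rw [C.iM_iV_comm, hX, map_zero, smul_zero]
  have hZiY : C.iM m Z (C.iV Y Ω) = 0 := by
    rw [C.iM_iV_comm, hZ, map_zero, smul_zero]
  have hkey := C.iM_sbrk m Y X (C.iV Y Ω)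
  rw [← hZdef, hZiY, hXiY, map_zero, hd] at hkey
  have hXdξ : C.iM m X (C.d ξ) = 0 := by
    have h : ((-1 : ℤ) ^ (1 + m)) • C.iM m X (C.d ξ) = 0 := by
      have := hkey.symm
      rwa [zero_sub, neg_eq_zero] at this
    calc C.iM m X (C.d ξ)
        = ((-1 : ℤ) ^ (1 + m)) • (((-1 : ℤ) ^ (1 + m)) • C.iM m X (C.d ξ)) := by
          rw [smul_smul, ← pow_add, Even.neg_one_pow ⟨1 + m, rfl⟩, one_smul]
      _ = 0 := by rw [h, smul_zero]
  rw [MVCalc.lieM, hXξ, hXdξ, map_zero, smul_zero, sub_zero]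
end
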